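/- Let k ≥ 1 be an integer, let G be a k-tree that contains a Hamiltonian path, and let K be any k-clique of G. Then the graph G − K obtained by deleting the vertices of K has at most k + 1 connected components, and at most k + 1 vertices of G − K are complete to K. -/

import Mathlib

open SimpleGraph

/-- The set of neighbors of `e i` among the earlier vertices `e j`, `j < i`. -/
def earlierNbrs {V : Type} (G : SimpleGraph V) {p : ℕ} (e : Fin p ≃ V) (i : Fin p) : Set V :=
  {v | ∃ j : Fin p, j < i ∧ v = e j ∧ G.Adj (e i) v}

/-- `e` is a `k`-simplicial ordering of the vertices of `G`. -/
def IsKSimplicialOrdering {V : Type} [Fintype V] (k : ℕ) (G : SimpleGraph V)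
    (e : Fin (Fintype.card V) ≃ V) : Prop :=
  G.IsClique (⇑e '' {i | (i : ℕ) < k}) ∧
  ∀ i : Fin (Fintype.card V), k ≤ (i : ℕ) →
    G.IsClique (earlierNbrs G e i) ∧ (earlierNbrs G e i).ncard = k

/-- A `k`-tree is a graph on at least `k` vertices admitting a `k`-simplicial ordering. -/
def IsKTree {V : Type} [Fintype V] (k : ℕ) (G : SimpleGraph V) : Prop :=
  k ≤ Fintype.card V ∧ ∃ e : Fin (Fintype.card V) ≃ V, IsKSimplicialOrdering k G e

/-- L1: a vertex has at most `k` neighbors that are earlier in the ordering. -/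
lemma aux_overflow {V : Type} [Fintype V] {k : ℕ} {G : SimpleGraph V}
    {e : Fin (Fintype.card V) ≃ V} (he : IsKSimplicialOrdering k G e)
    (v : V) (T : Set V)
    (hT : ∀ t ∈ T, G.Adj v t ∧ ((e.symm t : Fin _) : ℕ) < ((e.symm v : Fin _) : ℕ)) :
    T.ncard ≤ k := by
  by_cases hv : k ≤ ((e.symm v : Fin _) : ℕ)
  · have h1 := (he.2 (e.symm v) hv).2
    have hsub : T ⊆ earlierNbrs G e (e.symm v) := by
      intro t ht
      obtain ⟨hadj, hlt⟩ := hT t ht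
      refine ⟨e.symm t, Fin.lt_def.mpr hlt, (e.apply_symm_apply t).symm, ?_⟩
      rw [e.apply_symm_apply]; exact hadj
    calc T.ncard ≤ (earlierNbrs G e (e.symm v)).ncard :=
          Set.ncard_le_ncard hsub (Set.toFinite _)
      _ = k := h1
  · push_neg at hv
    have hsub : T ⊆ ⇑e '' {i | (i : ℕ) < k} := by
      intro t ht
      exact ⟨e.symm t, lt_trans (hT t ht).2 hv, e.apply_symm_apply t⟩
    have h2 : {i : Fin (Fintype.card V) | (i : ℕ) < k}.ncard ≤ k := by
      have h3 := Set.ncard_le_ncard_of_injOn (fun i : Fin (Fintype.card V) => (i : ℕ))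
        (t := (↑(Finset.range k) : Set ℕ))
        (by intro i hi; simpa using (show (i : ℕ) < k from hi)) (Fin.val_injective.injOn) (Set.toFinite _)
      rwa [Set.ncard_coe_finset, Finset.card_range] at h3
    calc T.ncard ≤ (⇑e '' {i : Fin (Fintype.card V) | (i : ℕ) < k}).ncard :=
          Set.ncard_le_ncard hsub (Set.toFinite _)
      _ ≤ {i : Fin (Fintype.card V) | (i : ℕ) < k}.ncard := by
          rw [Set.ncard_image_of_injective _ e.injective]
      _ ≤ k := h2

/-- L2: two earlier neighbors of a vertex are adjacent. -/
lemma aux_earlier_adj {V : Type} [Fintype V] {k : ℕ} {G : SimpleGraph V}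
    {e : Fin (Fintype.card V) ≃ V} (he : IsKSimplicialOrdering k G e)
    {v a b : V} (hva : G.Adj v a) (hvb : G.Adj v b)
    (ha : ((e.symm a : Fin _) : ℕ) < ((e.symm v : Fin _) : ℕ))
    (hb : ((e.symm b : Fin _) : ℕ) < ((e.symm v : Fin _) : ℕ))
    (hab : a ≠ b) : G.Adj a b := by
  by_cases hv : k ≤ ((e.symm v : Fin _) : ℕ)
  · exact (he.2 (e.symm v) hv).1
      ⟨e.symm a, Fin.lt_def.mpr ha, (e.apply_symm_apply a).symm, by rw [e.apply_symm_apply]; exact hva⟩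
      ⟨e.symm b, Fin.lt_def.mpr hb, (e.apply_symm_apply b).symm, by rw [e.apply_symm_apply]; exact hvb⟩ hab
  · push_neg at hv
    exact he.1 ⟨e.symm a, lt_trans ha hv, e.apply_symm_apply a⟩
      ⟨e.symm b, lt_trans hb hv, e.apply_symm_apply b⟩ hab

/-- D': any path can be replaced by one whose vertices all have `f`-value at most
the max of the endpoints, given the "earlier neighbors are adjacent" property. -/
lemma exists_descending_path {V : Type} {G : SimpleGraph V} (f : V → ℕ)
    (hf : Function.Injective f)
    (hlocal : ∀ v a b : V, G.Adj v a → G.Adj v b → f a < f v → f b < f v → a ≠ b → G.Adj a b) :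
    ∀ (L : ℕ) (a b : V) (p : G.Walk a b), p.IsPath → p.length ≤ L →
      ∃ q : G.Walk a b, q.IsPath ∧ ∀ v ∈ q.support, f v ≤ max (f a) (f b) := by
  intro L
  induction L using Nat.strong_induction_on with
  | _ L ih =>
    intro a b p hp hlen
    classical
    by_cases hall : ∀ v ∈ p.support, f v ≤ max (f a) (f b)
    · exact ⟨p, hp, hall⟩
    push_neg at hall
    obtain ⟨v0, hv0, hv0f⟩ := hall
    obtain ⟨m, hm_mem', hm_max'⟩ := p.support.toFinset.exists_max_image f
      ⟨v0, List.mem_toFinset.mpr hv0⟩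
    have hm_mem : m ∈ p.support := List.mem_toFinset.mp hm_mem'
    have hm_max : ∀ w ∈ p.support, f w ≤ f m := fun w hw =>
      hm_max' w (List.mem_toFinset.mpr hw)
    have hv0m : max (f a) (f b) < f m := lt_of_lt_of_le hv0f (hm_max v0 hv0)
    have hma : m ≠ a := by
      rintro rfl
      exact absurd hv0m (by simp)
    have hmb : m ≠ b := by
      rintro rfl
      exact absurd hv0m (by simp)
    set t := p.takeUntil m hm_mem with ht
    set d := p.dropUntil m hm_mem with hd
    have hspec : t.append d = p := p.take_spec hm_mem
    have htp : t.IsPath := hp.takeUntil hm_mem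
    have hdp : d.IsPath := hp.dropUntil hm_mem
    obtain ⟨u, hmu, t1, ht1⟩ := Walk.not_nil_iff.mp
      (Walk.not_nil_of_ne (p := t.reverse) hma)
    obtain ⟨w, hmw, d1, hd1⟩ := Walk.not_nil_iff.mp
      (Walk.not_nil_of_ne (p := d) hmb)
    have hut1 : u ∈ t1.support := t1.start_mem_support
    have hut : u ∈ t.support := by
      have : u ∈ t.reverse.support := by rw [ht1]; simp
      rwa [Walk.support_reverse, List.mem_reverse] at this
    have hum : u ≠ m := by
      have hnd : t.reverse.support.Nodup := htp.reverse.support_nodup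
      rw [ht1, Walk.support_cons] at hnd
      exact fun h => (List.nodup_cons.mp hnd).1 (h ▸ hut1)
    have hwd1 : w ∈ d1.support := d1.start_mem_support
    have hwm : w ≠ m := by
      have hnd : d.support.Nodup := hdp.support_nodup
      rw [hd1, Walk.support_cons] at hnd
      exact fun h => (List.nodup_cons.mp hnd).1 (h ▸ hwd1)
    have hwd : w ∈ d.support.tail := by rw [hd1]; simpa using hwd1
    have huw : u ≠ w := by
      have hnd := hp.support_nodup
      rw [← hspec, Walk.support_append] at hnd
      have hdisj := (List.nodup_append'.mp hnd).2.2
      exact fun h => hdisj hut (h ▸ hwd)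
    have hup : u ∈ p.support := p.support_takeUntil_subset hm_mem hut
    have hwp : w ∈ p.support := p.support_dropUntil_subset hm_mem
      (by rw [← hd, hd1, Walk.support_cons]; exact List.mem_cons_of_mem _ hwd1)
    have hfu : f u < f m := lt_of_le_of_ne (hm_max u hup) (fun h => hum (hf h))
    have hfw : f w < f m := lt_of_le_of_ne (hm_max w hwp) (fun h => hwm (hf h))
    have hadj : G.Adj u w := hlocal m u w hmu hmw hfu hfw huw
    set q1 : G.Walk a b := (t1.reverse).append (Walk.cons hadj d1) with hq1
    have hlq1 : q1.length + 1 = p.length := by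
      have e1 : p.length = t.length + d.length := by
        rw [← hspec, Walk.length_append]
      have e2 : t.length = t1.length + 1 := by
        have := congrArg Walk.length ht1
        rwa [Walk.length_reverse, Walk.length_cons] at this
      have e3 : d.length = d1.length + 1 := by
        rw [hd1, Walk.length_cons]
      rw [hq1, Walk.length_append, Walk.length_reverse, Walk.length_cons]
      omega
    have h2 : 2 ≤ p.length := by
      have e2 : t.length = t1.length + 1 := by
        have := congrArg Walk.length ht1
        rwa [Walk.length_reverse, Walk.length_cons] at this
      have e3 : d.length = d1.length + 1 := by rw [hd1, Walk.length_cons]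
      have e1 : p.length = t.length + d.length := by rw [← hspec, Walk.length_append]
      omega
    have hbl : q1.bypass.length ≤ L - 1 :=
      le_trans (Walk.length_bypass_le _) (by omega)
    exact ih (L - 1) (by omega) a b q1.bypass q1.bypass_isPath hbl

lemma aux_core {V : Type} [Fintype V] {k : ℕ} (hk : 1 ≤ k) {G : SimpleGraph V}
    {e : Fin (Fintype.card V) ≃ V} (he : IsKSimplicialOrdering k G e)
    {K : Set V} (hK : G.IsClique K) (hKcard : K.ncard = k)
    {x y : V} (hx : x ∉ K) (hy : y ∉ K)
    (hfyx : ((e.symm y : Fin _) : ℕ) < ((e.symm x : Fin _) : ℕ))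
    (hxc : ∀ u ∈ K, G.Adj x u) (hyc : ∀ u ∈ K, G.Adj y u) :
    ¬ (G.induce Kᶜ).Reachable ⟨x, hx⟩ ⟨y, hy⟩ := by
  classical
  set f : V → ℕ := fun v => ((e.symm v : Fin _) : ℕ) with hfdef
  have hfinj : Function.Injective f := fun a b h => by
    have : e.symm a = e.symm b := Fin.val_injective h
    exact e.symm.injective this
  have hxy : x ≠ y := fun h => lt_irrefl _ (h ▸ hfyx)
  intro hreach
  obtain ⟨p0⟩ := hreach
  have hfHinj : Function.Injective (fun v : ↥Kᶜ => f v.val) :=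
    hfinj.comp Subtype.val_injective
  have hlocalH : ∀ v a b : ↥Kᶜ, (G.induce Kᶜ).Adj v a → (G.induce Kᶜ).Adj v b →
      f a.val < f v.val → f b.val < f v.val → a ≠ b → (G.induce Kᶜ).Adj a b := by
    intro v a b hva hvb hfa hfb hab
    have hva' : G.Adj v.val a.val := hva
    have hvb' : G.Adj v.val b.val := hvb
    have : G.Adj a.val b.val :=
      aux_earlier_adj he hva' hvb' hfa hfb (fun h => hab (Subtype.ext h))
    exact this
  obtain ⟨q, hqp, hqs⟩ := exists_descending_path (fun v : ↥Kᶜ => f v.val) hfHinj hlocalH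
    p0.bypass.length ⟨x, hx⟩ ⟨y, hy⟩ p0.bypass p0.bypass_isPath le_rfl
  have hmax : max (f x) (f y) = f x := max_eq_left (le_of_lt hfyx)
  have hKne : K.Nonempty := Set.nonempty_of_ncard_ne_zero (by omega)
  obtain ⟨z0, hz0K, hz0max⟩ := Set.exists_max_image K f K.toFinite hKne
  by_cases hcase : f x < f z0
  · have hT := aux_overflow he z0 (insert x (insert y (K \ {z0}))) ?_
    · have hyK' : y ∉ K \ {z0} := fun h => hy h.1
      have hxK' : x ∉ insert y (K \ {z0}) := by
        intro h
        rcases h with h | h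
        · exact hxy h
        · exact hx h.1
      have hcard : (insert x (insert y (K \ {z0}))).ncard = k + 1 := by
        rw [Set.ncard_insert_of_notMem hxK', Set.ncard_insert_of_notMem hyK',
          Set.ncard_diff_singleton_of_mem hz0K, hKcard]
        omega
      omega
    · intro t ht
      rcases ht with rfl | rfl | ht
      · exact ⟨(hxc z0 hz0K).symm, hcase⟩
      · exact ⟨(hyc z0 hz0K).symm, lt_trans hfyx hcase⟩
      · refine ⟨hK hz0K ht.1 (Ne.symm ht.2), ?_⟩
        exact lt_of_le_of_ne (hz0max t ht.1) (fun h => ht.2 (hfinj h))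
  · push_neg at hcase
    have hKlt : ∀ z ∈ K, f z < f x := by
      intro z hz
      refine lt_of_le_of_ne (le_trans (hz0max z hz) hcase) (fun h => hx ?_)
      rwa [hfinj h] at hz
    have hnexy : (⟨x, hx⟩ : ↥Kᶜ) ≠ ⟨y, hy⟩ :=
      fun h => hxy (congrArg Subtype.val h)
    obtain ⟨u1, hadj1, q1, hq1⟩ := Walk.not_nil_iff.mp (Walk.not_nil_of_ne (p := q) hnexy)
    have hu1mem : u1 ∈ q.support := by
      rw [hq1, Walk.support_cons]
      exact List.mem_cons_of_mem _ q1.start_mem_support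
    have hu1ne : u1 ≠ ⟨x, hx⟩ := by
      have hnd := hqp.support_nodup
      rw [hq1, Walk.support_cons] at hnd
      exact fun h => (List.nodup_cons.mp hnd).1 (h ▸ q1.start_mem_support)
    have hfu1 : f u1.val < f x := by
      refine lt_of_le_of_ne ?_ (fun h => hu1ne (Subtype.ext (hfinj h)))
      have := hqs u1 hu1mem
      rwa [show max (f x) (f y) = f x from hmax] at this
    have hT := aux_overflow he x (insert u1.val K) ?_
    · have hcard : (insert u1.val K).ncard = k + 1 := by
        rw [Set.ncard_insert_of_notMem u1.2, hKcard]
      omega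
    · intro t ht
      rcases ht with rfl | ht
      · exact ⟨hadj1, hfu1⟩
      · exact ⟨hxc t ht, hKlt t ht⟩

lemma aux_not_reachable {V : Type} [Fintype V] {k : ℕ} (hk : 1 ≤ k) {G : SimpleGraph V}
    {e : Fin (Fintype.card V) ≃ V} (he : IsKSimplicialOrdering k G e)
    {K : Set V} (hK : G.IsClique K) (hKcard : K.ncard = k)
    {x y : V} (hx : x ∉ K) (hy : y ∉ K) (hxy : x ≠ y)
    (hxc : ∀ u ∈ K, G.Adj x u) (hyc : ∀ u ∈ K, G.Adj y u) :
    ¬ (G.induce Kᶜ).Reachable ⟨x, hx⟩ ⟨y, hy⟩ := by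
  rcases lt_trichotomy ((e.symm x : Fin _) : ℕ) ((e.symm y : Fin _) : ℕ) with h | h | h
  · exact fun hr => aux_core hk he hK hKcard hy hx h hyc hxc hr.symm
  · exact absurd (e.symm.injective (Fin.val_injective h)) hxy
  · exact aux_core hk he hK hKcard hx hy h hxc hyc

/-- If `G` is a `k`-tree (`k ≥ 1`) containing a Hamiltonian path and `K` is any
`k`-clique of `G`, then `G - K` has at most `k + 1` connected components and at most
`k + 1` vertices of `G - K` are complete to `K`. -/
theorem ktree_hamiltonian_components {V : Type} [Fintype V] [DecidableEq V] (k : ℕ) (hk : 1 ≤ k)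
    (G : SimpleGraph V) (hG : IsKTree k G)
    (hham : ∃ (u v : V) (p : G.Walk u v), p.IsHamiltonian)
    (K : Set V) (hK : G.IsClique K) (hKcard : K.ncard = k) :
    Nat.card (G.induce Kᶜ).ConnectedComponent ≤ k + 1 ∧
    {v : V | v ∉ K ∧ ∀ u ∈ K, G.Adj v u}.ncard ≤ k + 1 := by
  classical
  obtain ⟨hcard, e, he⟩ := hG
  obtain ⟨u, v, p, hp⟩ := hham
  set L := p.support with hL
  have hLmem : ∀ w, w ∈ L := fun w => hp.mem_support w
  have hnodup : L.Nodup := List.nodup_iff_count_le_one.mpr (fun w => le_of_eq (hp w))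
  set pred : V → Bool := fun z => decide (z ∈ K) with hpred
  have hidx_lt : ∀ w : V, L.idxOf w < L.length :=
    fun w => List.idxOf_lt_length_iff.mpr (hLmem w)
  have hget : ∀ w : V, L[L.idxOf w]'(hidx_lt w) = w :=
    fun w => List.getElem_idxOf (hidx_lt w)
  have hfK : K.Finite := K.toFinite
  -- total count of K-vertices along the path is k
  have hcountL : L.countP pred ≤ k := by
    rw [List.countP_eq_length_filter]
    have hnd : (L.filter pred).Nodup := hnodup.filter _
    have hsub : (L.filter pred).toFinset ⊆ hfK.toFinset := by
      intro z hz
      rw [List.mem_toFinset] at hz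
      have := List.of_mem_filter hz
      rw [Set.Finite.mem_toFinset]
      simpa [hpred] using this
    calc (L.filter pred).length = (L.filter pred).toFinset.card :=
          (List.toFinset_card_of_nodup hnd).symm
      _ ≤ hfK.toFinset.card := Finset.card_le_card hsub
      _ = K.ncard := (Set.ncard_eq_toFinset_card K hfK).symm
      _ = k := hKcard
  have hcle : ∀ w : V, (L.take (L.idxOf w)).countP pred ≤ k :=
    fun w => le_trans (List.Sublist.countP_le (List.take_sublist _ _)) hcountL
  -- monotonicity of prefix counts
  have hmono : ∀ i j : ℕ, i ≤ j →
      (L.take i).countP pred ≤ (L.take j).countP pred := by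
    intro i j hij
    have h1 : (L.take j).take i = L.take i := by
      rw [List.take_take, inf_eq_left.mpr hij]
    rw [← h1]
    exact List.Sublist.countP_le (List.take_sublist _ _)
  have hbump : ∀ (m : ℕ) (hm : m < L.length), L[m] ∈ K →
      (L.take (m+1)).countP pred = (L.take m).countP pred + 1 := by
    intro m hm hmK
    rw [List.take_succ, List.countP_append, List.getElem?_eq_getElem hm]
    simp [hpred, List.countP_cons, hmK]
  -- consecutive vertices on the path are adjacent
  have hchainstep : ∀ (i : ℕ) (h : i + 1 < L.length),
      G.Adj (L[i]'(by omega)) (L[i+1]'h) := by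
    intro i h
    have hc := List.isChain_iff_getElem.mp (p.isChain_adj_support)
    have := hc i (by rw [← hL]; omega)
    simpa using this
  -- reachability along K-free stretches of the path
  have reach : ∀ (d i : ℕ) (hd : i + d < L.length)
      (hall : ∀ (m : ℕ) (hm : m < L.length), i ≤ m → m ≤ i + d → L[m] ∉ K),
      (G.induce Kᶜ).Reachable
        ⟨L[i]'(Nat.lt_of_le_of_lt (Nat.le_add_right i d) hd),
          hall i (Nat.lt_of_le_of_lt (Nat.le_add_right i d) hd) le_rfl (Nat.le_add_right i d)⟩
        ⟨L[i+d]'hd, hall (i+d) hd (Nat.le_add_right i d) le_rfl⟩ := by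
    intro d
    induction d with
    | zero => intro i hd hall; exact Reachable.refl _
    | succ d ihd =>
      intro i hd hall
      have h1 : i + d < L.length := by omega
      have r1 := ihd i h1 (fun m hm h2 h3 => hall m hm h2 (by omega))
      have hadj : (G.induce Kᶜ).Adj
          ⟨L[i+d]'h1, hall (i+d) h1 (by omega) (by omega)⟩
          ⟨L[i+(d+1)]'hd, hall (i+(d+1)) hd (by omega) le_rfl⟩ := by
        have : G.Adj (L[i+d]'h1) (L[(i+d)+1]'(by omega : (i+d)+1 < L.length)) :=
          hchainstep (i+d) (by omega)
        exact this
      exact r1.trans hadj.reachable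
  -- vertices with equal prefix-counts are reachable from one another
  have key' : ∀ (w1 w2 : V) (h1 : w1 ∉ K) (h2 : w2 ∉ K),
      L.idxOf w1 ≤ L.idxOf w2 →
      (L.take (L.idxOf w1)).countP pred = (L.take (L.idxOf w2)).countP pred →
      (G.induce Kᶜ).Reachable ⟨w1, h1⟩ ⟨w2, h2⟩ := by
    intro w1 w2 h1 h2 hle hc
    obtain ⟨d0, hd0⟩ := Nat.exists_eq_add_of_le hle
    have hlt2 := hidx_lt w2
    have hd : L.idxOf w1 + d0 < L.length := by omega
    have hnoK : ∀ (m : ℕ) (hm : m < L.length),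
        L.idxOf w1 ≤ m → m ≤ L.idxOf w1 + d0 → L[m] ∉ K := by
      intro m hm hm1 hm2 hmem
      have hm2' : m ≤ L.idxOf w2 := by omega
      rcases eq_or_lt_of_le hm2' with heq | hlt
      · have hw2 : L[m]'hm = w2 := by
          apply Option.some.inj
          rw [← List.getElem?_eq_getElem hm, heq, List.getElem?_eq_getElem (hidx_lt w2),
            hget w2]
        exact h2 (hw2 ▸ hmem)
      · have b1 := hmono (L.idxOf w1) m hm1
        have b2 := hbump m hm hmem
        have b3 := hmono (m+1) (L.idxOf w2) (Nat.succ_le_of_lt hlt)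
        omega
    have r := reach d0 (L.idxOf w1) hd hnoK
    have e2 : L[L.idxOf w1 + d0]'hd = w2 := by
      apply Option.some.inj
      rw [← List.getElem?_eq_getElem hd, ← hd0, List.getElem?_eq_getElem (hidx_lt w2), hget w2]
    convert r using 2
    · exact (hget w1).symm
    · exact e2.symm
  have key : ∀ (w1 w2 : V) (h1 : w1 ∉ K) (h2 : w2 ∉ K),
      (L.take (L.idxOf w1)).countP pred = (L.take (L.idxOf w2)).countP pred →
      (G.induce Kᶜ).Reachable ⟨w1, h1⟩ ⟨w2, h2⟩ := by
    intro w1 w2 h1 h2 hc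
    rcases le_total (L.idxOf w1) (L.idxOf w2) with hle | hle
    · exact key' w1 w2 h1 h2 hle hc
    · exact (key' w2 w1 h2 h1 hle hc.symm).symm
  -- the injection from components to Fin (k+1)
  have hFinj : Function.Injective
      (fun C : (G.induce Kᶜ).ConnectedComponent =>
        (⟨(L.take (L.idxOf (Quot.out C).val)).countP pred,
          Nat.lt_succ_of_le (hcle _)⟩ : Fin (k+1))) := by
    intro C1 C2 hC
    have hcc : (L.take (L.idxOf (Quot.out C1).val)).countP pred
        = (L.take (L.idxOf (Quot.out C2).val)).countP pred := by
      simpa using congrArg Fin.val hC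
    have hr := key _ _ (Quot.out C1).2 (Quot.out C2).2 hcc
    have hr' : (G.induce Kᶜ).Reachable (Quot.out C1) (Quot.out C2) := hr
    exact ((Quot.out_eq C1).symm.trans (Quot.sound hr')).trans (Quot.out_eq C2)
  have part1 : Nat.card (G.induce Kᶜ).ConnectedComponent ≤ k + 1 := by
    calc Nat.card (G.induce Kᶜ).ConnectedComponent ≤ Nat.card (Fin (k+1)) :=
          Nat.card_le_card_of_injective _ hFinj
      _ = k + 1 := by simp
  refine ⟨part1, ?_⟩
  -- part 2
  set Cs : Set V := {v : V | v ∉ K ∧ ∀ u ∈ K, G.Adj v u} with hCs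
  have hginj : Function.Injective
      (fun w : ↥Cs => (G.induce Kᶜ).connectedComponentMk ⟨w.val, w.2.1⟩) := by
    intro a b hg
    by_contra hne
    have hvne : a.val ≠ b.val := fun h => hne (Subtype.ext h)
    have hr := (SimpleGraph.ConnectedComponent.eq).mp hg
    exact aux_not_reachable hk he hK hKcard a.2.1 b.2.1 hvne a.2.2 b.2.2 hr
  calc Cs.ncard = Nat.card ↥Cs := (Nat.card_coe_set_eq _).symm
    _ ≤ Nat.card (G.induce Kᶜ).ConnectedComponent :=
        Nat.card_le_card_of_injective _ hginj
    _ ≤ k + 1 := part1
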